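/- arXiv:1607.05081 — 2 statements merged into one kernel-verified Lean document; each statement's English description precedes it below -/
import Mathlib

section
/- Let N ≥ 2 and let c_1, …, c_N ∈ ℂ be the coefficients of the monic polynomial P_N(z) = z^N + Σ_{m=1}^N c_m z^{N−m}. Let y_1, …, y_N : ℝ → ℂ be functions differentiable at every t ∈ [0,1], pairwise distinct there (y_n(t) ≠ y_ℓ(t) for n ≠ ℓ and all t ∈ [0,1]), and set γ_m(0) = (−1)^m Σ_{N ≥ n_1 > n_2 > … > n_m ≥ 1} y_{n_1}(0) y_{n_2}(0) ⋯ y_{n_m}(0) for m = 1, …, N. Suppose that for every n ∈ {1, …, N} and every t ∈ [0,1] the differential equations ẏ_n(t) = −(∏_{ℓ=1, ℓ≠n}^{N} (y_n(t) − y_ℓ(t)))^{−1} · Σ_{m=1}^{N} (c_m − γ_m(0)) · y_n(t)^{N−m} hold. Then for every z ∈ ℂ one has ∏_{n=1}^{N} (z − y_n(1)) = z^N + Σ_{m=1}^{N} c_m z^{N−m}; that is, the values y_1(1), …, y_N(1) are exactly the N zeros of P_N. -/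
open Finset Polynomial


lemma lagrange_sum {N : ℕ} (hN : 0 < N) (a : Fin N → ℂ) (v : Fin N → ℂ)
    (hv : Function.Injective v) (z : ℂ) :
    ∑ n : Fin N, (∏ ℓ ∈ univ.erase n, (z - v ℓ)) *
      ((∏ ℓ ∈ univ.erase n, (v n - v ℓ))⁻¹ * ∑ m : Fin N, a m * (v n) ^ (N - 1 - m.1))
    = ∑ m : Fin N, a m * z ^ (N - 1 - m.1) := by
  classical
  set q : Polynomial ℂ := ∑ m : Fin N, C (a m) * X ^ (N - 1 - m.1) with hq
  have heval : ∀ w : ℂ, q.eval w = ∑ m : Fin N, a m * w ^ (N - 1 - m.1) := by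
    intro w; simp [hq, eval_finset_sum]
  have hdeg : q.degree < (univ : Finset (Fin N)).card := by
    rw [card_univ, Fintype.card_fin]
    refine lt_of_le_of_lt (degree_sum_le _ _) ?_
    rw [Finset.sup_lt_iff (by exact_mod_cast WithBot.bot_lt_coe N)]
    intro m _
    refine lt_of_le_of_lt (degree_C_mul_X_pow_le _ _) ?_
    exact_mod_cast (by omega : N - 1 - m.1 < N)
  have hinterp := Lagrange.eq_interpolate (f := q) (v := v) (s := univ) (hv.injOn) hdeg
  have h2 := congrArg (Polynomial.eval z) hinterp
  rw [Lagrange.interpolate_apply] at h2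
  simp only [eval_finset_sum, eval_mul, eval_C, Lagrange.basis, Lagrange.basisDivisor,
    eval_prod, eval_sub, eval_X, heval] at h2
  rw [h2]
  refine Finset.sum_congr rfl fun n _ => ?_
  rw [Finset.prod_mul_distrib, Finset.prod_inv_distrib]
  ring

lemma vieta {N : ℕ} (w : Fin N → ℂ) (z : ℂ) :
    ∏ n : Fin N, (z - w n) = z ^ N +
      ∑ m : Fin N, ((-1:ℂ) ^ (m.1+1) *
        ∑ s ∈ powersetCard (m.1+1) (univ : Finset (Fin N)), ∏ i ∈ s, w i) * z ^ (N - 1 - m.1) := by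
  classical
  have h1 : ∀ n : Fin N, z - w n = -w n + z := fun n => by ring
  simp only [h1]
  rw [Finset.prod_add, Finset.sum_powerset]
  rw [Finset.card_univ, Fintype.card_fin, Finset.sum_range_succ']
  have h0 : ∑ t ∈ powersetCard 0 (univ : Finset (Fin N)),
      (∏ i ∈ t, -w i) * ∏ i ∈ (univ \ t), z = z ^ N := by
    simp [Finset.powersetCard_zero, Finset.prod_const, Finset.card_univ]
  rw [h0, add_comm]
  congr 1
  rw [Finset.sum_range fun i => _]
  refine Finset.sum_congr rfl fun m _ => ?_
  have key : ∀ t ∈ powersetCard (m.1+1) (univ : Finset (Fin N)),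
      (∏ i ∈ t, -w i) * ∏ i ∈ (univ \ t), z
        = ((-1:ℂ) ^ (m.1+1) * ∏ i ∈ t, w i) * z ^ (N - 1 - m.1) := by
    intro t ht
    obtain ⟨hsub, hcard⟩ := Finset.mem_powersetCard.mp ht
    have hcard2 : (univ \ t).card = N - 1 - m.1 := by
      rw [Finset.card_sdiff_of_subset hsub, Finset.card_univ, Fintype.card_fin, hcard]
      omega
    rw [Finset.prod_const, hcard2]
    congr 1
    calc ∏ i ∈ t, -w i = ∏ i ∈ t, (-1:ℂ) * w i :=
          Finset.prod_congr rfl fun i _ => (neg_one_mul (w i)).symm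
      _ = (-1:ℂ)^(m.1+1) * ∏ i ∈ t, w i := by
          rw [Finset.prod_mul_distrib, Finset.prod_const, hcard]
  rw [Finset.sum_congr rfl key, ← Finset.sum_mul, ← Finset.mul_sum]

/-- If the zeros `y n` evolve according to the differential algorithm
`ẏ_n(t) = −(∏_{ℓ≠n}(y_n−y_ℓ))⁻¹ · Σ_m (c_m − γ_m(0)) y_n^{N−m}` on `[0,1]`,
staying pairwise distinct, then `y_1(1), …, y_N(1)` are exactly the zeros of
`P_N(z) = z^N + Σ_{m=1}^N c_m z^{N−m}`.  Here the index `m : Fin N` corresponds to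
the paper's index `m+1 ∈ {1,…,N}`, so the power is `N−1−m` and the sign `(−1)^(m+1)`. -/
theorem statement0 (N : ℕ) (hN : 2 ≤ N) (c : Fin N → ℂ)
    (y : Fin N → ℝ → ℂ)
    (hdist : ∀ t ∈ Set.Icc (0 : ℝ) 1, ∀ n ℓ : Fin N, n ≠ ℓ → y n t ≠ y ℓ t)
    (γ0 : Fin N → ℂ)
    (hγ0 : ∀ m : Fin N, γ0 m = (-1 : ℂ) ^ (m.1 + 1) *
      ∑ s ∈ Finset.powersetCard (m.1 + 1) (Finset.univ : Finset (Fin N)),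
        ∏ i ∈ s, y i 0)
    (hode : ∀ n : Fin N, ∀ t ∈ Set.Icc (0 : ℝ) 1,
      HasDerivAt (y n)
        (-(∏ ℓ ∈ Finset.univ.erase n, (y n t - y ℓ t))⁻¹ *
          ∑ m : Fin N, (c m - γ0 m) * (y n t) ^ (N - 1 - m.1)) t) :
    ∀ z : ℂ, ∏ n : Fin N, (z - y n 1) =
      z ^ N + ∑ m : Fin N, c m * z ^ (N - 1 - m.1) := by
  intro z
  have hNpos : 0 < N := by omega
  have h11 : (1:ℝ) ∈ Set.Icc (0:ℝ) 1 := by constructor <;> norm_num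
  set Qz : ℂ := ∑ m : Fin N, (c m - γ0 m) * z ^ (N - 1 - m.1) with hQz
  set F : ℝ → ℂ := fun t => ∏ n : Fin N, (z - y n t) with hF
  have hFderiv : ∀ t ∈ Set.Icc (0:ℝ) 1, HasDerivAt F Qz t := by
    intro t ht
    have hinj : Function.Injective (fun n => y n t) := by
      intro n ℓ h
      by_contra hne
      exact hdist t ht n ℓ hne h
    have hd : ∀ n ∈ (univ : Finset (Fin N)), HasDerivAt (fun s => z - y n s)
        (-(-(∏ ℓ ∈ univ.erase n, (y n t - y ℓ t))⁻¹ *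
          ∑ m : Fin N, (c m - γ0 m) * (y n t) ^ (N - 1 - m.1))) t :=
      fun n _ => (hode n t ht).const_sub z
    have h := HasDerivAt.fun_finsetProd hd
    have hls := lagrange_sum hNpos (fun m => c m - γ0 m) (fun n => y n t) hinj z
    have heq : (∑ i : Fin N, (∏ j ∈ univ.erase i, (z - y j t)) •
        (-(-(∏ ℓ ∈ univ.erase i, (y i t - y ℓ t))⁻¹ *
          ∑ m : Fin N, (c m - γ0 m) * (y i t) ^ (N - 1 - m.1)))) = Qz := by
      rw [hQz, ← hls]
      refine Finset.sum_congr rfl fun n _ => ?_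
      simp only [smul_eq_mul, neg_mul, neg_neg]
    exact heq ▸ h
  have hg : ∀ t ∈ Set.Icc (0:ℝ) 1, HasDerivAt (fun t => F t - t • Qz) 0 t := by
    intro t ht
    have := (hFderiv t ht).sub ((hasDerivAt_id t).smul_const Qz)
    simp at this; exact this
  have hconst := constant_of_has_deriv_right_zero
    (f := fun t => F t - t • Qz) (a := 0) (b := 1)
    (fun t ht => (hg t ht).continuousAt.continuousWithinAt)
    (fun t ht => (hg t (Set.mem_Icc_of_Ico ht)).hasDerivWithinAt)
  have h10 := hconst 1 h11
  simp only [one_smul, zero_smul, sub_zero] at h10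
  have hF0 : F 0 = z ^ N + ∑ m : Fin N, γ0 m * z ^ (N - 1 - m.1) := by
    show (∏ n : Fin N, (z - y n 0)) = _
    rw [vieta (fun n => y n 0) z]
    congr 1
    exact Finset.sum_congr rfl fun m _ => by rw [hγ0 m]
  have hfin : F 1 = z ^ N + ∑ m : Fin N, c m * z ^ (N - 1 - m.1) := by
    have hF1 : F 1 = F 0 + Qz := by linear_combination h10
    rw [hF1, hF0, hQz, add_assoc, ← Finset.sum_add_distrib]
    congr 1
    exact Finset.sum_congr rfl fun m _ => by ring
  exact hfin
end

section
/- Let N ≥ 2 and let c_1, …, c_N ∈ ℂ. Let y_1, …, y_N : ℝ → ℂ be functions differentiable at every t ∈ [0,1] and pairwise distinct on [0,1] (y_n(t) ≠ y_ℓ(t) for n ≠ ℓ, t ∈ [0,1]). For each m ∈ {1, …, N} and t ∈ [0,1], define γ_m(t) = (−1)^m Σ_{N ≥ n_1 > n_2 > … > n_m ≥ 1} y_{n_1}(t) y_{n_2}(t) ⋯ y_{n_m}(t), so that z^N + Σ_{m=1}^N γ_m(t) z^{N−m} = ∏_{n=1}^N (z − y_n(t)) for all z ∈ ℂ. Suppose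 that for every n and every t ∈ [0,1] the differential equations ẏ_n(t) = −(∏_{ℓ≠n} (y_n(t) − y_ℓ(t)))^{−1} · Σ_{m=1}^{N} (c_m − γ_m(0)) · y_n(t)^{N−m} hold. Then for every m ∈ {1, …, N} and every t ∈ [0,1], γ_m(t) = γ_m(0) + (c_m − γ_m(0)) t; in particular γ_m(1) = c_m. -/
open Finset Polynomial

lemma reindex_aux {α : Type*} [DecidableEq α] [Fintype α] (m : ℕ) (g : α → Finset α → ℂ) :
    ∑ s ∈ powersetCard (m + 1) (univ : Finset α), ∑ i ∈ s, g i (s.erase i)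
      = ∑ i : α, ∑ s ∈ powersetCard m (univ.erase i), g i s := by
  rw [Finset.sum_sigma', Finset.sum_sigma']
  refine Finset.sum_bij' (fun p _ => ⟨p.2, p.1.erase p.2⟩)
    (fun p _ => ⟨insert p.1 p.2, p.1⟩) ?_ ?_ ?_ ?_ ?_
  · rintro ⟨s, i⟩ hp
    simp only [Finset.mem_sigma, Finset.mem_powersetCard] at hp ⊢
    obtain ⟨⟨hsub, hcard⟩, hi⟩ := hp
    refine ⟨Finset.mem_univ _, ?_, ?_⟩
    · exact Finset.erase_subset_erase _ hsub
    · rw [Finset.card_erase_of_mem hi, hcard]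
      omega
  · rintro ⟨i, s⟩ hp
    simp only [Finset.mem_sigma, Finset.mem_powersetCard] at hp ⊢
    obtain ⟨-, hsub, hcard⟩ := hp
    have hins : i ∉ s := fun h => (Finset.mem_erase.mp (hsub h)).1 rfl
    exact ⟨⟨Finset.subset_univ _, by rw [Finset.card_insert_of_notMem hins, hcard]⟩,
      Finset.mem_insert_self _ _⟩
  · rintro ⟨s, i⟩ hp
    simp only [Finset.mem_sigma, Finset.mem_powersetCard] at hp
    simp [Finset.insert_erase hp.2]
  · rintro ⟨i, s⟩ hp
    simp only [Finset.mem_sigma, Finset.mem_powersetCard] at hp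
    have hins : i ∉ s := fun h => (Finset.mem_erase.mp (hp.2.1 h)).1 rfl
    simp [Finset.erase_insert hins]
  · rintro ⟨s, i⟩ _
    rfl

lemma key_identity (N : ℕ) (hN : 1 ≤ N) (a v b : Fin N → ℂ)
    (hinj : ∀ n ℓ : Fin N, n ≠ ℓ → a n ≠ a ℓ)
    (hv : ∀ n, v n = -(∏ ℓ ∈ Finset.univ.erase n, (a n - a ℓ))⁻¹ *
        ∑ k : Fin N, b k * a n ^ (N - 1 - k.1)) (m : Fin N) :
    (-1 : ℂ) ^ (m.1 + 1) *
      ∑ s ∈ Finset.powersetCard (m.1 + 1) (Finset.univ : Finset (Fin N)),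
        ∑ i ∈ s, (∏ j ∈ s.erase i, a j) * v i = b m := by
  have hprodne : ∀ n : Fin N, (∏ ℓ ∈ Finset.univ.erase n, (a n - a ℓ)) ≠ 0 := by
    intro n
    refine Finset.prod_ne_zero_iff.mpr fun ℓ hℓ => ?_
    exact sub_ne_zero.mpr (hinj n ℓ (Ne.symm (Finset.mem_erase.mp hℓ).1))
  set R : ℂ[X] := ∑ n : Fin N, C (-v n) * ∏ ℓ ∈ Finset.univ.erase n, (X - C (a ℓ)) with hR
  set Q : ℂ[X] := ∑ k : Fin N, C (b k) * X ^ (N - 1 - k.1) with hQ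
  have hm1 : m.1 ≤ N - 1 := Nat.le_sub_one_of_lt m.2
  have hcard_erase : ∀ n : Fin N, (Finset.univ.erase n).card = N - 1 := by
    intro n
    rw [Finset.card_erase_of_mem (Finset.mem_univ n), Finset.card_univ, Fintype.card_fin]
  -- degree bounds
  have hdegR : R.degree < (Finset.univ : Finset (Fin N)).card := by
    rw [Finset.card_univ, Fintype.card_fin]
    refine lt_of_le_of_lt (Polynomial.degree_sum_le _ _) ?_
    rw [Finset.sup_lt_iff (by exact_mod_cast WithBot.bot_lt_coe N)]
    intro n _
    refine lt_of_le_of_lt (Polynomial.degree_mul_le _ _) ?_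
    have h1 : (C (-v n)).degree ≤ 0 := Polynomial.degree_C_le
    have h2 : (∏ ℓ ∈ Finset.univ.erase n, (X - C (a ℓ))).degree
        = ((N - 1 : ℕ) : WithBot ℕ) := by
      rw [Polynomial.degree_prod]
      simp [Polynomial.degree_X_sub_C, hcard_erase n]
    calc (C (-v n)).degree + (∏ ℓ ∈ Finset.univ.erase n, (X - C (a ℓ))).degree
        ≤ 0 + ((N - 1 : ℕ) : WithBot ℕ) := add_le_add h1 (le_of_eq h2)
      _ = ((N - 1 : ℕ) : WithBot ℕ) := zero_add _
      _ < ((N : ℕ) : WithBot ℕ) := by exact_mod_cast Nat.sub_lt hN one_pos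
  have hdegQ : Q.degree < (Finset.univ : Finset (Fin N)).card := by
    rw [Finset.card_univ, Fintype.card_fin]
    refine lt_of_le_of_lt (Polynomial.degree_sum_le _ _) ?_
    rw [Finset.sup_lt_iff (by exact_mod_cast WithBot.bot_lt_coe N)]
    intro k _
    refine lt_of_le_of_lt (Polynomial.degree_mul_le _ _) ?_
    have h1 : (C (b k)).degree ≤ 0 := Polynomial.degree_C_le
    calc (C (b k)).degree + (X ^ (N - 1 - k.1) : ℂ[X]).degree
        ≤ 0 + ((N - 1 - k.1 : ℕ) : WithBot ℕ) :=
          add_le_add h1 (le_of_eq (Polynomial.degree_X_pow _))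
      _ = ((N - 1 - k.1 : ℕ) : WithBot ℕ) := zero_add _
      _ < ((N : ℕ) : WithBot ℕ) := by
          exact_mod_cast lt_of_le_of_lt (Nat.sub_le _ _) (Nat.sub_lt hN one_pos)
  -- evaluation equality
  have heval : ∀ j : Fin N, R.eval (a j) = Q.eval (a j) := by
    intro j
    have hQe : Q.eval (a j) = ∑ k : Fin N, b k * a j ^ (N - 1 - k.1) := by
      rw [hQ, Polynomial.eval_finset_sum]
      simp
    have hRe : R.eval (a j)
        = ∑ n : Fin N, -v n * ∏ ℓ ∈ Finset.univ.erase n, (a j - a ℓ) := by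
      rw [hR, Polynomial.eval_finset_sum]
      simp [Polynomial.eval_prod]
    rw [hRe, hQe, Finset.sum_eq_single j]
    · rw [hv j]
      have hp := hprodne j
      field_simp
    · intro n _ hn
      exact mul_eq_zero_of_right _ (Finset.prod_eq_zero
        (Finset.mem_erase.mpr ⟨Ne.symm hn, Finset.mem_univ _⟩) (sub_self _))
    · intro h; exact absurd (Finset.mem_univ j) h
  have hRQ : R = Q := by
    refine Polynomial.eq_of_degrees_lt_of_eval_index_eq (v := a) Finset.univ ?_ hdegR hdegQ
      fun j _ => heval j
    intro i _ j _ h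
    by_contra hne
    exact hinj i j hne h
  -- coefficient extraction
  have hQc : Q.coeff (N - 1 - m.1) = b m := by
    rw [hQ, Polynomial.finset_sum_coeff]
    rw [Finset.sum_eq_single m]
    · simp [Polynomial.coeff_C_mul, Polynomial.coeff_X_pow]
    · intro k _ hk
      have hk1 : k.1 ≤ N - 1 := Nat.le_sub_one_of_lt k.2
      have hne : ¬(N - 1 - m.1 = N - 1 - k.1) := by
        intro h
        exact hk (Fin.ext (by omega))
      simp [Polynomial.coeff_C_mul, Polynomial.coeff_X_pow, hne]
    · intro h; exact absurd (Finset.mem_univ m) h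
  have hRc : R.coeff (N - 1 - m.1)
      = (-1 : ℂ) ^ (m.1 + 1) * ∑ n : Fin N,
          v n * ∑ s ∈ Finset.powersetCard m.1 (Finset.univ.erase n), ∏ j ∈ s, a j := by
    rw [hR, Polynomial.finset_sum_coeff]
    have hterm : ∀ n : Fin N,
        (C (-v n) * ∏ ℓ ∈ Finset.univ.erase n, (X - C (a ℓ))).coeff (N - 1 - m.1)
          = -v n * ((-1 : ℂ) ^ m.1 *
            ∑ s ∈ Finset.powersetCard m.1 (Finset.univ.erase n), ∏ j ∈ s, a j) := by
      intro n
      rw [Polynomial.coeff_C_mul]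
      congr 1
      have hprod : (∏ ℓ ∈ Finset.univ.erase n, (X - C (a ℓ)))
          = (((Finset.univ.erase n).val.map a).map fun t => X - C t).prod := by
        rw [Multiset.map_map]
        rfl
      have hcard : Multiset.card ((Finset.univ.erase n).val.map a) = N - 1 := by
        rw [Multiset.card_map]
        exact hcard_erase n
      rw [hprod, Multiset.prod_X_sub_C_coeff _ (by rw [hcard]; exact Nat.sub_le _ _)]
      rw [hcard]
      have hmm : N - 1 - (N - 1 - m.1) = m.1 := by omega
      rw [hmm, Finset.esymm_map_val]
    rw [Finset.sum_congr rfl fun n _ => hterm n]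
    rw [Finset.mul_sum]
    congr 1
    funext n
    ring
  calc (-1 : ℂ) ^ (m.1 + 1) *
      ∑ s ∈ Finset.powersetCard (m.1 + 1) (Finset.univ : Finset (Fin N)),
        ∑ i ∈ s, (∏ j ∈ s.erase i, a j) * v i
      = (-1 : ℂ) ^ (m.1 + 1) * ∑ n : Fin N,
          v n * ∑ s ∈ Finset.powersetCard m.1 (Finset.univ.erase n), ∏ j ∈ s, a j := by
        rw [reindex_aux m.1 (fun i s => (∏ j ∈ s, a j) * v i)]
        refine congrArg _ (Finset.sum_congr rfl fun n _ => ?_)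
        rw [Finset.mul_sum]
        exact Finset.sum_congr rfl fun s _ => mul_comm _ _
    _ = R.coeff (N - 1 - m.1) := hRc.symm
    _ = Q.coeff (N - 1 - m.1) := by rw [hRQ]
    _ = b m := hQc

/-- Under the differential algorithm
`ẏ_n(t) = −(∏_{ℓ≠n}(y_n−y_ℓ))⁻¹ · Σ_m (c_m − γ_m(0)) y_n^{N−m}` on `[0,1]`, the
coefficients `γ_m(t) = (−1)^m e_m(y(t))` of the monic polynomial with zeros `y_n(t)`
evolve linearly: `γ_m(t) = γ_m(0) + (c_m − γ_m(0)) t`; in particular `γ_m(1) = c_m`.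
The index `m : Fin N` corresponds to the paper's `m+1 ∈ {1,…,N}`. -/
theorem statement3 (N : ℕ) (hN : 2 ≤ N) (c : Fin N → ℂ)
    (y : Fin N → ℝ → ℂ)
    (hdiff : ∀ n : Fin N, ∀ t ∈ Set.Icc (0 : ℝ) 1, DifferentiableAt ℝ (y n) t)
    (hdist : ∀ t ∈ Set.Icc (0 : ℝ) 1, ∀ n ℓ : Fin N, n ≠ ℓ → y n t ≠ y ℓ t)
    (γ : Fin N → ℝ → ℂ)
    (hγ : ∀ m : Fin N, ∀ t : ℝ, γ m t = (-1 : ℂ) ^ (m.1 + 1) *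
      ∑ s ∈ Finset.powersetCard (m.1 + 1) (Finset.univ : Finset (Fin N)),
        ∏ i ∈ s, y i t)
    (hfact : ∀ t ∈ Set.Icc (0 : ℝ) 1, ∀ z : ℂ,
      z ^ N + ∑ m : Fin N, γ m t * z ^ (N - 1 - m.1) =
        ∏ n : Fin N, (z - y n t))
    (hode : ∀ n : Fin N, ∀ t ∈ Set.Icc (0 : ℝ) 1,
      HasDerivAt (y n)
        (-(∏ ℓ ∈ Finset.univ.erase n, (y n t - y ℓ t))⁻¹ *
          ∑ m : Fin N, (c m - γ m 0) * (y n t) ^ (N - 1 - m.1)) t) :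
    (∀ m : Fin N, ∀ t ∈ Set.Icc (0 : ℝ) 1,
      γ m t = γ m 0 + (c m - γ m 0) * (t : ℂ)) ∧
    (∀ m : Fin N, γ m 1 = c m) := by
  have hN1 : 1 ≤ N := le_trans one_le_two hN
  -- the derivative of γ m is constant
  have hder : ∀ m : Fin N, ∀ t ∈ Set.Icc (0 : ℝ) 1,
      HasDerivAt (γ m) (c m - γ m 0) t := by
    intro m t ht
    set v : Fin N → ℂ := fun n =>
      -(∏ ℓ ∈ Finset.univ.erase n, (y n t - y ℓ t))⁻¹ *
        ∑ k : Fin N, (c k - γ k 0) * (y n t) ^ (N - 1 - k.1) with hvdef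
    have h1 : HasDerivAt (γ m)
        ((-1 : ℂ) ^ (m.1 + 1) *
          ∑ s ∈ Finset.powersetCard (m.1 + 1) (Finset.univ : Finset (Fin N)),
            ∑ i ∈ s, (∏ j ∈ s.erase i, y j t) • v i) t := by
      have : γ m = fun t => (-1 : ℂ) ^ (m.1 + 1) *
          ∑ s ∈ Finset.powersetCard (m.1 + 1) (Finset.univ : Finset (Fin N)),
            ∏ i ∈ s, y i t := funext (hγ m)
      rw [this]
      exact HasDerivAt.const_mul _
        (HasDerivAt.fun_sum fun s _ => HasDerivAt.fun_finset_prod fun i _ => hode i t ht)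
    have hkey : (-1 : ℂ) ^ (m.1 + 1) *
        ∑ s ∈ Finset.powersetCard (m.1 + 1) (Finset.univ : Finset (Fin N)),
          ∑ i ∈ s, (∏ j ∈ s.erase i, y j t) • v i = c m - γ m 0 := by
      have := key_identity N hN1 (fun n => y n t) v (fun k => c k - γ k 0)
        (fun n ℓ h => hdist t ht n ℓ h) (fun n => rfl) m
      simpa [smul_eq_mul] using this
    rwa [hkey] at h1
  have hmain : ∀ m : Fin N, ∀ t ∈ Set.Icc (0 : ℝ) 1,
      γ m t = γ m 0 + (c m - γ m 0) * (t : ℂ) := by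
    intro m t ht
    set f : ℝ → ℂ := fun s => γ m s - (γ m 0 + (c m - γ m 0) * (s : ℂ)) with hfdef
    have hf : ∀ s ∈ Set.Icc (0 : ℝ) 1,
        HasDerivWithinAt f ((fun _ : ℝ => (0 : ℂ)) s) (Set.Icc (0 : ℝ) 1) s := by
      intro s hs
      have h2 : HasDerivAt (fun s : ℝ => γ m 0 + (c m - γ m 0) * (s : ℂ))
          (c m - γ m 0) s := by
        have h3 : HasDerivAt (fun s : ℝ => ((s : ℝ) : ℂ)) 1 s :=
          (hasDerivAt_id s).ofReal_comp
        have h4 := (h3.const_mul (c m - γ m 0)).const_add (γ m 0)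
        simpa using h4
      have := (hder m s hs).sub h2
      have h5 : HasDerivWithinAt f (c m - γ m 0 - (c m - γ m 0)) (Set.Icc (0 : ℝ) 1) s :=
        this.hasDerivWithinAt
      simpa using h5
    have hb := Convex.norm_image_sub_le_of_norm_hasDerivWithin_le hf
      (fun x _ => le_of_eq (norm_zero)) (convex_Icc 0 1)
      (Set.left_mem_Icc.mpr zero_le_one) ht
    have hf0 : f 0 = 0 := by simp [hfdef]
    have : f t = 0 := by
      rw [← hf0]
      have : ‖f t - f 0‖ ≤ 0 := by simpa using hb
      have := le_antisymm this (norm_nonneg _)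
      rw [← sub_eq_zero]
      exact norm_eq_zero.mp this
    have := sub_eq_zero.mp this
    simpa [hfdef] using this
  refine ⟨hmain, fun m => ?_⟩
  have := hmain m 1 (Set.right_mem_Icc.mpr zero_le_one)
  simp only [Complex.ofReal_one, mul_one] at this
  rw [this]
  ring
end
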